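/- Let 2 ≤ r ≤ n and let V₁, V₂ be proper votes corresponding to injections σ₁, σ₂ from {1,…,r} into {1,…,n}, with sufficient statistic t = A_{n,r}(e_{σ₁} + e_{σ₂}) where e_σ denotes the standard unit vector of ℕ^{S_{n,r}}. Define the graph G on vertex set {1,…,r} with an edge {j,j'} (j ≠ j') if and only if the multisets {σ₁(j), σ₂(j)} and {σ₁(j'), σ₂(j')} share a candidate, and let L be the number of connected components of G other than isolated vertices j with σ₁(j) = σ₂(j). Then the fiber F_t = {x ∈ ℕ^{S_{n,r}} : A_{n,r} x = t} has exactly two elements if and only if L = 2, and in that case, writing F_t = {x, y}, every Markov basis of A_{n,r} contains x − y or y − x. -/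

import Mathlib

/-- The sufficient-statistic map (configuration matrix `A_{n,r}` applied to a
nonnegative integer vector indexed by `S_{n,r}`, the injections from `Fin r` to `Fin n`):
the `(j,k)` coordinate counts, with multiplicity `x σ`, the votes `σ` with `σ j = k`. -/
noncomputable def suffN (n r : ℕ) (x : (Fin r ↪ Fin n) → ℕ) : Fin r × Fin n → ℕ :=
  fun p => ∑ σ : Fin r ↪ Fin n, if σ p.1 = p.2 then x σ else 0

/-- The configuration matrix `A_{n,r}` applied to an integer vector. -/
noncomputable def suffZ (n r : ℕ) (z : (Fin r ↪ Fin n) → ℤ) : Fin r × Fin n → ℤ :=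
  fun p => ∑ σ : Fin r ↪ Fin n, if σ p.1 = p.2 then z σ else 0

/-- The degree of a move `z`: `Σ_σ max(z σ, 0)`. -/
noncomputable def moveDeg (n r : ℕ) (z : (Fin r ↪ Fin n) → ℤ) : ℕ :=
  ∑ σ : Fin r ↪ Fin n, (z σ).toNat

/-- `B` is a Markov basis for `A_{n,r}`: a finite set of moves (elements of the integer
kernel of `A_{n,r}`) such that any two points of a common fiber are connected by a path
staying in the fiber whose steps are elements of `B ∪ (-B)`. -/
def IsMarkovBasis (n r : ℕ) (B : Finset ((Fin r ↪ Fin n) → ℤ)) : Prop :=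
  (∀ z ∈ B, suffZ n r z = 0) ∧
  ∀ x y : (Fin r ↪ Fin n) → ℕ, suffN n r x = suffN n r y →
    ∃ (m : ℕ) (w : ℕ → (Fin r ↪ Fin n) → ℕ),
      w 0 = x ∧ w m = y ∧
      (∀ i ≤ m, suffN n r (w i) = suffN n r x) ∧
      (∀ i < m, (fun σ => (w (i+1) σ : ℤ) - (w i σ : ℤ)) ∈ B ∨
                (fun σ => (w i σ : ℤ) - (w (i+1) σ : ℤ)) ∈ B)

/-- The proper vote (0–1 matrix) corresponding to an injection `σ`. -/
noncomputable def voteMat (n r : ℕ) (σ : Fin r ↪ Fin n) : Matrix (Fin r) (Fin n) ℤ :=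
  fun j k => if σ j = k then 1 else 0

/-- The graph on positions `{1,…,r}` associated with two proper votes `σ₁, σ₂`: positions
`j ≠ j'` are adjacent iff the blocks (multisets) `{σ₁ j, σ₂ j}` and `{σ₁ j', σ₂ j'}`
share a candidate. -/
def blockGraph (n r : ℕ) (σ₁ σ₂ : Fin r ↪ Fin n) : SimpleGraph (Fin r) where
  Adj j j' := j ≠ j' ∧
    (σ₁ j = σ₁ j' ∨ σ₁ j = σ₂ j' ∨ σ₂ j = σ₁ j' ∨ σ₂ j = σ₂ j')
  symm := by
    refine ⟨?_⟩
    intro j j' h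
    refine ⟨h.1.symm, ?_⟩
    rcases h.2 with h | h | h | h
    · exact Or.inl h.symm
    · exact Or.inr (Or.inr (Or.inl h.symm))
    · exact Or.inr (Or.inl h.symm)
    · exact Or.inr (Or.inr (Or.inr h.symm))
  loopless := ⟨fun j h => h.1 rfl⟩

/-- A connected component of the block graph is brushed aside iff it is an isolated
vertex `j` whose block is of the form `{k, k}`, i.e. `σ₁ j = σ₂ j`. -/
def IsTrivialComp (n r : ℕ) (σ₁ σ₂ : Fin r ↪ Fin n)
    (c : (blockGraph n r σ₁ σ₂).ConnectedComponent) : Prop :=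
  ∃ j : Fin r, c = (blockGraph n r σ₁ σ₂).connectedComponentMk j ∧
    σ₁ j = σ₂ j ∧ ∀ j', ¬ (blockGraph n r σ₁ σ₂).Adj j j'

/-- `L`: the number of connected components of the block graph other than isolated
vertices `j` with `σ₁ j = σ₂ j`. -/
noncomputable def numComp (n r : ℕ) (σ₁ σ₂ : Fin r ↪ Fin n) : ℕ :=
  Nat.card {c : (blockGraph n r σ₁ σ₂).ConnectedComponent //
    ¬ IsTrivialComp n r σ₁ σ₂ c}


private lemma suffN_pair {n r : ℕ} (a b : Fin r ↪ Fin n) (p : Fin r × Fin n) :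
    suffN n r (fun τ => (if τ = a then 1 else 0) + (if τ = b then 1 else 0)) p
      = (if a p.1 = p.2 then 1 else 0) + (if b p.1 = p.2 then 1 else 0) := by
  unfold suffN
  have h : ∀ σ : Fin r ↪ Fin n,
      (if σ p.1 = p.2 then (if σ = a then 1 else 0) + (if σ = b then 1 else 0) else 0)
      = (if σ = a then (if a p.1 = p.2 then (1:ℕ) else 0) else 0)
        + (if σ = b then (if b p.1 = p.2 then (1:ℕ) else 0) else 0) := by
    intro σ
    by_cases ha : σ = a <;> by_cases hb : σ = b <;> subst_eqs <;> simp_all <;> split <;> omega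
  rw [Finset.sum_congr rfl (fun σ _ => h σ), Finset.sum_add_distrib,
    Finset.sum_ite_eq', Finset.sum_ite_eq']
  simp

private lemma sum_over_k {n r : ℕ} (x : (Fin r ↪ Fin n) → ℕ) (j : Fin r) :
    ∑ k : Fin n, suffN n r x (j, k) = ∑ σ : Fin r ↪ Fin n, x σ := by
  unfold suffN
  rw [Finset.sum_comm]
  refine Finset.sum_congr rfl fun σ _ => ?_
  simp [Finset.sum_ite_eq]

private lemma exists_pair_of_sum_two {I : Type*} [Fintype I] [DecidableEq I] (x : I → ℕ)
    (h : ∑ i, x i = 2) :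
    ∃ a b : I, x = fun i => (if i = a then 1 else 0) + (if i = b then 1 else 0) := by
  have h1 : ∃ a, x a ≠ 0 := by
    by_contra hc; push_neg at hc; simp [hc] at h
  obtain ⟨a, ha⟩ := h1
  have hsplit : x a + ∑ i ∈ Finset.univ.erase a, x i = 2 := by
    rw [Finset.add_sum_erase _ _ (Finset.mem_univ a)]; exact h
  rcases Nat.lt_or_ge (x a) 2 with hxa | hxa
  · have hxa1 : x a = 1 := by omega
    have h2 : ∑ i ∈ Finset.univ.erase a, x i = 1 := by omega
    have h3 : ∃ b ∈ Finset.univ.erase a, x b ≠ 0 := by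
      by_contra hc; push_neg at hc; rw [Finset.sum_eq_zero hc] at h2; omega
    obtain ⟨b, hb, hxb⟩ := h3
    have h4 : x b + ∑ i ∈ (Finset.univ.erase a).erase b, x i = 1 := by
      rw [Finset.add_sum_erase _ _ hb]; exact h2
    have hxb1 : x b = 1 := by omega
    have h5 : ∀ i ∈ (Finset.univ.erase a).erase b, x i = 0 :=
      Finset.sum_eq_zero_iff.mp (by omega)
    have hab : b ≠ a := (Finset.mem_erase.mp hb).1
    refine ⟨a, b, funext fun i => ?_⟩
    by_cases hia : i = a
    · subst hia; rw [if_pos rfl, if_neg (Ne.symm hab)]; omega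
    · by_cases hib : i = b
      · subst hib; rw [if_neg hia, if_pos rfl]; omega
      · rw [if_neg hia, if_neg hib]
        have := h5 i (by simp [hia, hib])
        omega
  · have h2 : ∑ i ∈ Finset.univ.erase a, x i = 0 := by omega
    have hxa2 : x a = 2 := by omega
    refine ⟨a, a, funext fun i => ?_⟩
    by_cases hia : i = a
    · subst hia; rw [if_pos rfl]; omega
    · rw [if_neg hia]
      have := Finset.sum_eq_zero_iff.mp h2 i (by simp [hia])
      omega

private lemma pair_eq_of_counts {α : Type*} [DecidableEq α] (A B C D : α)
    (h : ∀ k, ((if A = k then 1 else 0) + (if B = k then 1 else 0) : ℕ)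
      = (if C = k then 1 else 0) + (if D = k then 1 else 0)) :
    (A = C ∧ B = D) ∨ (A = D ∧ B = C) := by
  have hC := h C; have hD := h D
  by_cases e1 : A = C
  · left
    refine ⟨e1, ?_⟩
    by_cases e5 : C = D
    · have hAD : A = D := e1.trans e5
      rw [if_pos hAD, if_pos e5, if_pos rfl] at hD
      by_contra e4; rw [if_neg e4] at hD; omega
    · have hAD : ¬ A = D := fun h' => e5 (e1.symm.trans h')
      rw [if_neg hAD, if_neg e5, if_pos rfl] at hD
      by_contra e4; rw [if_neg e4] at hD; omega
  · right
    rw [if_neg e1, if_pos rfl] at hC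
    have e3 : B = C := by by_contra e3; rw [if_neg e3] at hC; omega
    have e5 : ¬ D = C := by intro e5; rw [if_pos e3, if_pos e5] at hC; omega
    refine ⟨?_, e3⟩
    have hBD : ¬ B = D := fun h' => e5 (h'.symm.trans e3)
    have hCD : ¬ C = D := fun h' => e5 h'.symm
    rw [if_neg hBD, if_neg hCD, if_pos rfl] at hD
    by_contra e2; rw [if_neg e2] at hD; omega

section Graph

variable {n r : ℕ} (σ₁ σ₂ a b : Fin r ↪ Fin n)

private lemma P_aux
    (hblk : ∀ j, (a j = σ₁ j ∧ b j = σ₂ j) ∨ (a j = σ₂ j ∧ b j = σ₁ j))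
    {j j' : Fin r} (hne : j ≠ j') (he : σ₁ j = σ₂ j') :
    ((a j = σ₂ j ∧ σ₁ j ≠ σ₂ j) ↔ (a j' = σ₂ j' ∧ σ₁ j' ≠ σ₂ j')) := by
  have hfj : σ₁ j ≠ σ₂ j := fun h => hne (σ₂.injective (h.symm.trans he))
  have hfj' : σ₁ j' ≠ σ₂ j' := fun h => hne (σ₁.injective (he.trans h.symm))
  constructor
  · rintro ⟨haj, -⟩
    refine ⟨?_, hfj'⟩
    have hbj : b j = σ₁ j := by
      rcases hblk j with ⟨h1, h2⟩ | ⟨h1, h2⟩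
      · exact absurd (h1.symm.trans haj) hfj
      · exact h2
    by_contra haj'
    have hbj' : b j' = σ₂ j' := by
      rcases hblk j' with ⟨h1, h2⟩ | ⟨h1, h2⟩
      · exact h2
      · exact absurd h1 haj'
    exact hne (b.injective (hbj.trans (he.trans hbj'.symm)))
  · rintro ⟨haj', -⟩
    refine ⟨?_, hfj⟩
    by_contra haj
    have h1 : a j = σ₁ j := by
      rcases hblk j with ⟨h1, h2⟩ | ⟨h1, h2⟩
      · exact h1
      · exact absurd h1 haj
    exact hne (a.injective (h1.trans (he.trans haj'.symm)))

private lemma P_adj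
    (hblk : ∀ j, (a j = σ₁ j ∧ b j = σ₂ j) ∨ (a j = σ₂ j ∧ b j = σ₁ j))
    {j j' : Fin r} (hadj : (blockGraph n r σ₁ σ₂).Adj j j') :
    ((a j = σ₂ j ∧ σ₁ j ≠ σ₂ j) ↔ (a j' = σ₂ j' ∧ σ₁ j' ≠ σ₂ j')) := by
  obtain ⟨hne, h1 | h2 | h3 | h4⟩ := hadj
  · exact absurd (σ₁.injective h1) hne
  · exact P_aux σ₁ σ₂ a b hblk hne h2
  · exact (P_aux σ₁ σ₂ a b hblk hne.symm h3.symm).symm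
  · exact absurd (σ₂.injective h4) hne

private lemma P_reach
    (hblk : ∀ j, (a j = σ₁ j ∧ b j = σ₂ j) ∨ (a j = σ₂ j ∧ b j = σ₁ j))
    {j j' : Fin r} (h : (blockGraph n r σ₁ σ₂).Reachable j j') :
    ((a j = σ₂ j ∧ σ₁ j ≠ σ₂ j) ↔ (a j' = σ₂ j' ∧ σ₁ j' ≠ σ₂ j')) := by
  obtain ⟨w⟩ := h
  induction w with
  | nil => exact Iff.rfl
  | cons hadj p ih => exact (P_adj σ₁ σ₂ a b hblk hadj).trans ih

private lemma fixed_isolated {j : Fin r}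
    (hfix : σ₁ j = σ₂ j) (j' : Fin r) : ¬ (blockGraph n r σ₁ σ₂).Adj j j' := by
  rintro ⟨hne, h | h | h | h⟩
  · exact hne (σ₁.injective h)
  · exact hne (σ₂.injective (hfix.symm.trans h))
  · exact hne (σ₁.injective (hfix.trans h))
  · exact hne (σ₂.injective h)

private lemma reach_isolated {V : Type*} {G : SimpleGraph V} {j j' : V}
    (hiso : ∀ u, ¬ G.Adj j u) (h : G.Reachable j j') : j = j' := by
  obtain ⟨w⟩ := h
  cases w with
  | nil => rfl
  | cons h p => exact absurd h (hiso _)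

private lemma trivial_iff (j : Fin r) :
    IsTrivialComp n r σ₁ σ₂ ((blockGraph n r σ₁ σ₂).connectedComponentMk j)
      ↔ σ₁ j = σ₂ j := by
  constructor
  · rintro ⟨j', hc, hfix, hiso⟩
    have hr : (blockGraph n r σ₁ σ₂).Reachable j j' :=
      SimpleGraph.ConnectedComponent.exact hc
    have : j' = j := reach_isolated hiso hr.symm
    rw [← this]; exact hfix
  · intro hfix
    exact ⟨j, rfl, hfix, fixed_isolated σ₁ σ₂ hfix⟩

private lemma swap_inj (Q : Fin r → Prop) [DecidablePred Q]
    (hQ : ∀ j j', j ≠ j' → (σ₁ j = σ₂ j' ∨ σ₂ j = σ₁ j') → (Q j ↔ Q j')) :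
    Function.Injective (fun j => if Q j then σ₂ j else σ₁ j) := by
  intro j j' h
  simp only at h
  by_contra hne
  by_cases q : Q j <;> by_cases q' : Q j'
  · rw [if_pos q, if_pos q'] at h; exact hne (σ₂.injective h)
  · rw [if_pos q, if_neg q'] at h
    exact q' ((hQ j j' hne (Or.inr h)).mp q)
  · rw [if_neg q, if_pos q'] at h
    exact q ((hQ j j' hne (Or.inl h)).mpr q')
  · rw [if_neg q, if_neg q'] at h; exact hne (σ₁.injective h)

end Graph

section Swap
variable {n r : ℕ} (σ₁ σ₂ : Fin r ↪ Fin n)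

private noncomputable def swapA (Q : Fin r → Prop) [DecidablePred Q]
    (hQ : ∀ j j', j ≠ j' → (σ₁ j = σ₂ j' ∨ σ₂ j = σ₁ j') → (Q j ↔ Q j')) :
    Fin r ↪ Fin n :=
  ⟨fun j => if Q j then σ₂ j else σ₁ j, swap_inj σ₁ σ₂ Q hQ⟩

private noncomputable def swapB (Q : Fin r → Prop) [DecidablePred Q]
    (hQ : ∀ j j', j ≠ j' → (σ₁ j = σ₂ j' ∨ σ₂ j = σ₁ j') → (Q j ↔ Q j')) :
    Fin r ↪ Fin n :=
  ⟨fun j => if Q j then σ₁ j else σ₂ j,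
    swap_inj σ₂ σ₁ Q (fun j j' hne hor => hQ j j' hne hor.symm)⟩

variable (Q : Fin r → Prop) [DecidablePred Q]
    (hQ : ∀ j j', j ≠ j' → (σ₁ j = σ₂ j' ∨ σ₂ j = σ₁ j') → (Q j ↔ Q j'))

private lemma swapA_apply (j : Fin r) :
    swapA σ₁ σ₂ Q hQ j = if Q j then σ₂ j else σ₁ j := rfl

private lemma swapB_apply (j : Fin r) :
    swapB σ₁ σ₂ Q hQ j = if Q j then σ₁ j else σ₂ j := rfl

private lemma swap_mem :
    suffN n r (fun τ => (if τ = swapA σ₁ σ₂ Q hQ then 1 else 0)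
        + (if τ = swapB σ₁ σ₂ Q hQ then 1 else 0))
      = suffN n r (fun τ => (if τ = σ₁ then 1 else 0) + (if τ = σ₂ then 1 else 0)) := by
  funext p
  rw [suffN_pair, suffN_pair, swapA_apply, swapB_apply]
  by_cases q : Q p.1
  · rw [if_pos q, if_pos q, add_comm]
  · rw [if_neg q, if_neg q]

private lemma pair_ne (a b c d : Fin r ↪ Fin n) (h1 : a ≠ c) (h2 : a ≠ d) :
    (fun τ : Fin r ↪ Fin n => ((if τ = a then 1 else 0) + (if τ = b then 1 else 0) : ℕ))
      ≠ fun τ => (if τ = c then 1 else 0) + (if τ = d then 1 else 0) := by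
  intro h
  have h' := congrFun h a
  rw [if_pos rfl, if_neg h1, if_neg h2] at h'
  omega

private lemma classify (x : (Fin r ↪ Fin n) → ℕ) (j0 : Fin r)
    (hx : suffN n r x
      = suffN n r (fun τ => (if τ = σ₁ then 1 else 0) + (if τ = σ₂ then 1 else 0))) :
    ∃ a b : Fin r ↪ Fin n,
      x = (fun τ => (if τ = a then 1 else 0) + (if τ = b then 1 else 0)) ∧
      (∀ j, (a j = σ₁ j ∧ b j = σ₂ j) ∨ (a j = σ₂ j ∧ b j = σ₁ j)) ∧
      (∀ j j', (blockGraph n r σ₁ σ₂).Reachable j j' →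
        ((a j = σ₂ j ∧ σ₁ j ≠ σ₂ j) ↔ (a j' = σ₂ j' ∧ σ₁ j' ≠ σ₂ j'))) := by
  have hsum2 : ∑ σ : Fin r ↪ Fin n,
      ((if σ = σ₁ then 1 else 0) + (if σ = σ₂ then 1 else 0) : ℕ) = 2 := by
    rw [Finset.sum_add_distrib, Finset.sum_ite_eq', Finset.sum_ite_eq']
    simp
  have hsum : ∑ σ : Fin r ↪ Fin n, x σ = 2 := by
    rw [← sum_over_k x j0]
    calc ∑ k : Fin n, suffN n r x (j0, k)
        = ∑ k : Fin n, suffN n r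
            (fun τ => (if τ = σ₁ then 1 else 0) + (if τ = σ₂ then 1 else 0)) (j0, k) := by
          rw [hx]
      _ = 2 := by rw [sum_over_k _ j0, hsum2]
  obtain ⟨a, b, hab⟩ := exists_pair_of_sum_two x hsum
  have hcnt : ∀ (j : Fin r) (k : Fin n),
      ((if a j = k then 1 else 0) + (if b j = k then 1 else 0) : ℕ)
        = (if σ₁ j = k then 1 else 0) + (if σ₂ j = k then 1 else 0) := by
    intro j k
    have := congrFun hx (j, k)
    rw [hab, suffN_pair, suffN_pair] at this
    exact this
  have hblk : ∀ j, (a j = σ₁ j ∧ b j = σ₂ j) ∨ (a j = σ₂ j ∧ b j = σ₁ j) :=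
    fun j => pair_eq_of_counts (a j) (b j) (σ₁ j) (σ₂ j) (hcnt j)
  exact ⟨a, b, hab, hblk, fun j j' h => P_reach σ₁ σ₂ a b hblk h⟩

end Swap

section Comp
variable {n r : ℕ} (σ₁ σ₂ : Fin r ↪ Fin n)

private lemma comp_closed (c : (blockGraph n r σ₁ σ₂).ConnectedComponent) :
    ∀ j j', j ≠ j' → (σ₁ j = σ₂ j' ∨ σ₂ j = σ₁ j') →
      (((blockGraph n r σ₁ σ₂).connectedComponentMk j = c)
        ↔ ((blockGraph n r σ₁ σ₂).connectedComponentMk j' = c)) := by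
  intro j j' hne hor
  have hadj : (blockGraph n r σ₁ σ₂).Adj j j' := ⟨hne, by tauto⟩
  rw [SimpleGraph.ConnectedComponent.connectedComponentMk_eq_of_adj hadj]

private noncomputable def swapC (c : (blockGraph n r σ₁ σ₂).ConnectedComponent) :
    Fin r ↪ Fin n :=
  @swapA n r σ₁ σ₂ (fun j => (blockGraph n r σ₁ σ₂).connectedComponentMk j = c)
    (Classical.decPred _) (comp_closed σ₁ σ₂ c)

private noncomputable def swapD (c : (blockGraph n r σ₁ σ₂).ConnectedComponent) :
    Fin r ↪ Fin n :=
  @swapB n r σ₁ σ₂ (fun j => (blockGraph n r σ₁ σ₂).connectedComponentMk j = c)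
    (Classical.decPred _) (comp_closed σ₁ σ₂ c)

private noncomputable def xswap (c : (blockGraph n r σ₁ σ₂).ConnectedComponent) :
    (Fin r ↪ Fin n) → ℕ :=
  fun τ => (if τ = swapC σ₁ σ₂ c then 1 else 0) + (if τ = swapD σ₁ σ₂ c then 1 else 0)

variable {c : (blockGraph n r σ₁ σ₂).ConnectedComponent} {j : Fin r}

private lemma swapC_eq_of (h : (blockGraph n r σ₁ σ₂).connectedComponentMk j = c) :
    swapC σ₁ σ₂ c j = σ₂ j := by
  simp only [swapC, swapA, Function.Embedding.coeFn_mk, if_pos h]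

private lemma swapC_eq_not (h : ¬ (blockGraph n r σ₁ σ₂).connectedComponentMk j = c) :
    swapC σ₁ σ₂ c j = σ₁ j := by
  simp only [swapC, swapA, Function.Embedding.coeFn_mk, if_neg h]

private lemma swapD_eq_of (h : (blockGraph n r σ₁ σ₂).connectedComponentMk j = c) :
    swapD σ₁ σ₂ c j = σ₁ j := by
  simp only [swapD, swapB, Function.Embedding.coeFn_mk, if_pos h]

private lemma swapD_eq_not (h : ¬ (blockGraph n r σ₁ σ₂).connectedComponentMk j = c) :
    swapD σ₁ σ₂ c j = σ₂ j := by
  simp only [swapD, swapB, Function.Embedding.coeFn_mk, if_neg h]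

private lemma xswap_mem (c : (blockGraph n r σ₁ σ₂).ConnectedComponent) :
    suffN n r (xswap σ₁ σ₂ c)
      = suffN n r (fun τ => (if τ = σ₁ then 1 else 0) + (if τ = σ₂ then 1 else 0)) := by
  unfold xswap swapC swapD
  exact @swap_mem n r σ₁ σ₂ _ (Classical.decPred _) (comp_closed σ₁ σ₂ c)

/-- refined classification -/
private lemma classify' (x : (Fin r ↪ Fin n) → ℕ) (j0 : Fin r)
    (hx : suffN n r x
      = suffN n r (fun τ => (if τ = σ₁ then 1 else 0) + (if τ = σ₂ then 1 else 0))) :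
    ∃ a b : Fin r ↪ Fin n,
      x = (fun τ => (if τ = a then 1 else 0) + (if τ = b then 1 else 0)) ∧
      (∀ j, σ₁ j = σ₂ j → a j = σ₁ j ∧ b j = σ₁ j) ∧
      (∀ j, a j = σ₂ j → σ₁ j ≠ σ₂ j → b j = σ₁ j) ∧
      (∀ j, σ₁ j ≠ σ₂ j → ¬ (a j = σ₂ j) → a j = σ₁ j ∧ b j = σ₂ j) ∧
      (∀ j j', (blockGraph n r σ₁ σ₂).Reachable j j' →
        ((a j = σ₂ j ∧ σ₁ j ≠ σ₂ j) ↔ (a j' = σ₂ j' ∧ σ₁ j' ≠ σ₂ j'))) := by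
  obtain ⟨a, b, hab, hblk, hreach⟩ := classify σ₁ σ₂ x j0 hx
  refine ⟨a, b, hab, ?_, ?_, ?_, hreach⟩
  · intro j hf
    rcases hblk j with ⟨h1, h2⟩ | ⟨h1, h2⟩
    · exact ⟨h1, h2.trans hf.symm⟩
    · exact ⟨h1.trans hf.symm, h2⟩
  · intro j ha hf
    rcases hblk j with ⟨h1, h2⟩ | ⟨h1, h2⟩
    · exact absurd (h1.symm.trans ha) hf
    · exact h2
  · intro j hf hna
    rcases hblk j with ⟨h1, h2⟩ | ⟨h1, h2⟩
    · exact ⟨h1, h2⟩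
    · exact absurd h1 hna

end Comp

section Classify2
variable {n r : ℕ} (σ₁ σ₂ : Fin r ↪ Fin n)

/-- if all nontrivial components coincide, every fiber element is `t`. -/
private lemma classify_le_one (j0 : Fin r)
    (hone : ∀ c c' : {c : (blockGraph n r σ₁ σ₂).ConnectedComponent //
        ¬ IsTrivialComp n r σ₁ σ₂ c}, c = c')
    (x : (Fin r ↪ Fin n) → ℕ)
    (hx : suffN n r x
      = suffN n r (fun τ => (if τ = σ₁ then 1 else 0) + (if τ = σ₂ then 1 else 0))) :
    x = (fun τ => (if τ = σ₁ then 1 else 0) + (if τ = σ₂ then 1 else 0)) := by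
  obtain ⟨a, b, hab, hfix, hPb, hnP, hreach⟩ := classify' σ₁ σ₂ x j0 hx
  by_cases hex : ∃ j1, σ₁ j1 ≠ σ₂ j1
  · obtain ⟨j1, hf1⟩ := hex
    have hnt1 : ¬ IsTrivialComp n r σ₁ σ₂ ((blockGraph n r σ₁ σ₂).connectedComponentMk j1) :=
      fun h => hf1 ((trivial_iff σ₁ σ₂ j1).mp h)
    have hcomp : ∀ j, σ₁ j ≠ σ₂ j →
        (blockGraph n r σ₁ σ₂).connectedComponentMk j
          = (blockGraph n r σ₁ σ₂).connectedComponentMk j1 := by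
      intro j hf
      have hnt : ¬ IsTrivialComp n r σ₁ σ₂ ((blockGraph n r σ₁ σ₂).connectedComponentMk j) :=
        fun h => hf ((trivial_iff σ₁ σ₂ j).mp h)
      exact congrArg Subtype.val (hone ⟨_, hnt⟩ ⟨_, hnt1⟩)
    have hPiff : ∀ j, σ₁ j ≠ σ₂ j →
        ((a j = σ₂ j ∧ σ₁ j ≠ σ₂ j) ↔ (a j1 = σ₂ j1 ∧ σ₁ j1 ≠ σ₂ j1)) := by
      intro j hf
      exact hreach j j1 (SimpleGraph.ConnectedComponent.exact (hcomp j hf))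
    by_cases p1 : a j1 = σ₂ j1 ∧ σ₁ j1 ≠ σ₂ j1
    · have hval : ∀ j, a j = σ₂ j ∧ b j = σ₁ j := by
        intro j
        by_cases hf : σ₁ j = σ₂ j
        · obtain ⟨h1, h2⟩ := hfix j hf
          exact ⟨h1.trans hf, h2⟩
        · have hPj : a j = σ₂ j ∧ σ₁ j ≠ σ₂ j := (hPiff j hf).mpr p1
          exact ⟨hPj.1, hPb j hPj.1 hf⟩
      have ha : a = σ₂ := DFunLike.ext _ _ fun j => (hval j).1
      have hb : b = σ₁ := DFunLike.ext _ _ fun j => (hval j).2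
      rw [hab, ha, hb]
      funext τ
      exact add_comm _ _
    · have hval : ∀ j, a j = σ₁ j ∧ b j = σ₂ j := by
        intro j
        by_cases hf : σ₁ j = σ₂ j
        · obtain ⟨h1, h2⟩ := hfix j hf
          exact ⟨h1, h2.trans hf⟩
        · have hnPj : ¬ (a j = σ₂ j) := fun ha =>
            p1 ((hPiff j hf).mp ⟨ha, hf⟩)
          exact hnP j hf hnPj
      have ha : a = σ₁ := DFunLike.ext _ _ fun j => (hval j).1
      have hb : b = σ₂ := DFunLike.ext _ _ fun j => (hval j).2
      rw [hab, ha, hb]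
  · push_neg at hex
    have hval : ∀ j, a j = σ₁ j ∧ b j = σ₂ j := by
      intro j
      obtain ⟨h1, h2⟩ := hfix j (hex j)
      exact ⟨h1, h2.trans (hex j)⟩
    have ha : a = σ₁ := DFunLike.ext _ _ fun j => (hval j).1
    have hb : b = σ₂ := DFunLike.ext _ _ fun j => (hval j).2
    rw [hab, ha, hb]

/-- with exactly the nontrivial components c1 c2, every fiber element is `t` or `xswap c1`. -/
private lemma classify_two (j0 : Fin r)
    {c1 c2 : (blockGraph n r σ₁ σ₂).ConnectedComponent} (hc12 : c1 ≠ c2)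
    (hall : ∀ c, ¬ IsTrivialComp n r σ₁ σ₂ c → c = c1 ∨ c = c2)
    {j1 j2 : Fin r}
    (hj1 : (blockGraph n r σ₁ σ₂).connectedComponentMk j1 = c1)
    (hj2 : (blockGraph n r σ₁ σ₂).connectedComponentMk j2 = c2)
    (hf1 : σ₁ j1 ≠ σ₂ j1) (hf2 : σ₁ j2 ≠ σ₂ j2)
    (x : (Fin r ↪ Fin n) → ℕ)
    (hx : suffN n r x
      = suffN n r (fun τ => (if τ = σ₁ then 1 else 0) + (if τ = σ₂ then 1 else 0))) :
    x = (fun τ => (if τ = σ₁ then 1 else 0) + (if τ = σ₂ then 1 else 0))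
      ∨ x = xswap σ₁ σ₂ c1 := by
  obtain ⟨a, b, hab, hfix, hPb, hnP, hreach⟩ := classify' σ₁ σ₂ x j0 hx
  have hcomp : ∀ j, σ₁ j ≠ σ₂ j →
      (blockGraph n r σ₁ σ₂).connectedComponentMk j = c1
        ∨ (blockGraph n r σ₁ σ₂).connectedComponentMk j = c2 := by
    intro j hf
    exact hall _ (fun h => hf ((trivial_iff σ₁ σ₂ j).mp h))
  have hP1 : ∀ j, (blockGraph n r σ₁ σ₂).connectedComponentMk j = c1 →
      ((a j = σ₂ j ∧ σ₁ j ≠ σ₂ j) ↔ (a j1 = σ₂ j1 ∧ σ₁ j1 ≠ σ₂ j1)) := by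
    intro j hc
    exact hreach j j1 (SimpleGraph.ConnectedComponent.exact (hc.trans hj1.symm))
  have hP2 : ∀ j, (blockGraph n r σ₁ σ₂).connectedComponentMk j = c2 →
      ((a j = σ₂ j ∧ σ₁ j ≠ σ₂ j) ↔ (a j2 = σ₂ j2 ∧ σ₁ j2 ≠ σ₂ j2)) := by
    intro j hc
    exact hreach j j2 (SimpleGraph.ConnectedComponent.exact (hc.trans hj2.symm))
  have hnt1 : ¬ IsTrivialComp n r σ₁ σ₂ c1 := by
    rw [← hj1]; exact fun h => hf1 ((trivial_iff σ₁ σ₂ j1).mp h)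
  -- on fixed j, the component is trivial hence ≠ c1
  have hfixc : ∀ j, σ₁ j = σ₂ j →
      ¬ (blockGraph n r σ₁ σ₂).connectedComponentMk j = c1 := by
    intro j hf hc
    exact hnt1 (hc ▸ (trivial_iff σ₁ σ₂ j).mpr hf)
  by_cases p1 : a j1 = σ₂ j1 ∧ σ₁ j1 ≠ σ₂ j1 <;>
    by_cases p2 : a j2 = σ₂ j2 ∧ σ₁ j2 ≠ σ₂ j2
  · -- both swapped : x = t (with roles exchanged)
    left
    have hval : ∀ j, a j = σ₂ j ∧ b j = σ₁ j := by
      intro j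
      by_cases hf : σ₁ j = σ₂ j
      · obtain ⟨h1, h2⟩ := hfix j hf
        exact ⟨h1.trans hf, h2⟩
      · have hPj : a j = σ₂ j ∧ σ₁ j ≠ σ₂ j := by
          rcases hcomp j hf with hc | hc
          · exact (hP1 j hc).mpr p1
          · exact (hP2 j hc).mpr p2
        exact ⟨hPj.1, hPb j hPj.1 hf⟩
    have ha : a = σ₂ := DFunLike.ext _ _ fun j => (hval j).1
    have hb : b = σ₁ := DFunLike.ext _ _ fun j => (hval j).2
    rw [hab, ha, hb]
    funext τ
    exact add_comm _ _
  · -- swapped exactly on c1 : x = xswap c1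
    right
    have hval : ∀ j, a j = swapC σ₁ σ₂ c1 j ∧ b j = swapD σ₁ σ₂ c1 j := by
      intro j
      by_cases hf : σ₁ j = σ₂ j
      · obtain ⟨h1, h2⟩ := hfix j hf
        rw [swapC_eq_not σ₁ σ₂ (hfixc j hf), swapD_eq_not σ₁ σ₂ (hfixc j hf)]
        exact ⟨h1, h2.trans hf⟩
      · rcases hcomp j hf with hc | hc
        · have hPj : a j = σ₂ j ∧ σ₁ j ≠ σ₂ j := (hP1 j hc).mpr p1
          rw [swapC_eq_of σ₁ σ₂ hc, swapD_eq_of σ₁ σ₂ hc]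
          exact ⟨hPj.1, hPb j hPj.1 hf⟩
        · have hcne : ¬ (blockGraph n r σ₁ σ₂).connectedComponentMk j = c1 := by
            rw [hc]; exact fun h => hc12 h.symm
          have hnPj : ¬ (a j = σ₂ j) := fun ha => p2 ((hP2 j hc).mp ⟨ha, hf⟩)
          rw [swapC_eq_not σ₁ σ₂ hcne, swapD_eq_not σ₁ σ₂ hcne]
          exact hnP j hf hnPj
    have ha : a = swapC σ₁ σ₂ c1 := DFunLike.ext _ _ fun j => (hval j).1
    have hb : b = swapD σ₁ σ₂ c1 := DFunLike.ext _ _ fun j => (hval j).2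
    rw [hab, ha, hb]
    rfl
  · -- swapped exactly on c2 : x = xswap c1 (roles exchanged)
    right
    have hval : ∀ j, a j = swapD σ₁ σ₂ c1 j ∧ b j = swapC σ₁ σ₂ c1 j := by
      intro j
      by_cases hf : σ₁ j = σ₂ j
      · obtain ⟨h1, h2⟩ := hfix j hf
        rw [swapC_eq_not σ₁ σ₂ (hfixc j hf), swapD_eq_not σ₁ σ₂ (hfixc j hf)]
        exact ⟨h1.trans hf, h2⟩
      · rcases hcomp j hf with hc | hc
        · have hnPj : ¬ (a j = σ₂ j) := fun ha => p1 ((hP1 j hc).mp ⟨ha, hf⟩)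
          rw [swapC_eq_of σ₁ σ₂ hc, swapD_eq_of σ₁ σ₂ hc]
          obtain ⟨h1, h2⟩ := hnP j hf hnPj
          exact ⟨h1, h2⟩
        · have hcne : ¬ (blockGraph n r σ₁ σ₂).connectedComponentMk j = c1 := by
            rw [hc]; exact fun h => hc12 h.symm
          have hPj : a j = σ₂ j ∧ σ₁ j ≠ σ₂ j := (hP2 j hc).mpr p2
          rw [swapC_eq_not σ₁ σ₂ hcne, swapD_eq_not σ₁ σ₂ hcne]
          exact ⟨hPj.1, hPb j hPj.1 hf⟩
    have ha : a = swapD σ₁ σ₂ c1 := DFunLike.ext _ _ fun j => (hval j).1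
    have hb : b = swapC σ₁ σ₂ c1 := DFunLike.ext _ _ fun j => (hval j).2
    rw [hab, ha, hb]
    funext τ
    exact add_comm _ _
  · -- nothing swapped : x = t
    left
    have hval : ∀ j, a j = σ₁ j ∧ b j = σ₂ j := by
      intro j
      by_cases hf : σ₁ j = σ₂ j
      · obtain ⟨h1, h2⟩ := hfix j hf
        exact ⟨h1, h2.trans hf⟩
      · have hnPj : ¬ (a j = σ₂ j) := by
          intro ha
          rcases hcomp j hf with hc | hc
          · exact p1 ((hP1 j hc).mp ⟨ha, hf⟩)
          · exact p2 ((hP2 j hc).mp ⟨ha, hf⟩)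
        exact hnP j hf hnPj
    have ha : a = σ₁ := DFunLike.ext _ _ fun j => (hval j).1
    have hb : b = σ₂ := DFunLike.ext _ _ fun j => (hval j).2
    rw [hab, ha, hb]

/-- `xswap c1 ≠ t` given two distinct nontrivial components with representatives. -/
private lemma xswap_ne_t {c1 c2 : (blockGraph n r σ₁ σ₂).ConnectedComponent}
    (hc12 : c1 ≠ c2) {j1 j2 : Fin r}
    (hj1 : (blockGraph n r σ₁ σ₂).connectedComponentMk j1 = c1)
    (hj2 : (blockGraph n r σ₁ σ₂).connectedComponentMk j2 = c2)
    (hf1 : σ₁ j1 ≠ σ₂ j1) (hf2 : σ₁ j2 ≠ σ₂ j2) :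
    xswap σ₁ σ₂ c1
      ≠ (fun τ => (if τ = σ₁ then 1 else 0) + (if τ = σ₂ then 1 else 0)) := by
  have h1 : swapC σ₁ σ₂ c1 ≠ σ₁ := by
    intro h
    have := DFunLike.congr_fun h j1
    rw [swapC_eq_of σ₁ σ₂ hj1] at this
    exact hf1 this.symm
  have h2 : swapC σ₁ σ₂ c1 ≠ σ₂ := by
    intro h
    have := DFunLike.congr_fun h j2
    rw [swapC_eq_not σ₁ σ₂ (by rw [hj2]; exact fun h => hc12 h.symm)] at this
    exact hf2 this
  exact pair_ne _ _ _ _ h1 h2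

/-- `xswap c1 ≠ xswap c2` given three distinct nontrivial components. -/
private lemma xswap_ne_xswap {c1 c2 c3 : (blockGraph n r σ₁ σ₂).ConnectedComponent}
    (h12 : c1 ≠ c2) (h13 : c1 ≠ c3) (h23 : c2 ≠ c3) {j1 j3 : Fin r}
    (hj1 : (blockGraph n r σ₁ σ₂).connectedComponentMk j1 = c1)
    (hj3 : (blockGraph n r σ₁ σ₂).connectedComponentMk j3 = c3)
    (hf1 : σ₁ j1 ≠ σ₂ j1) (hf3 : σ₁ j3 ≠ σ₂ j3) :
    xswap σ₁ σ₂ c1 ≠ xswap σ₁ σ₂ c2 := by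
  have h1 : swapC σ₁ σ₂ c1 ≠ swapC σ₁ σ₂ c2 := by
    intro h
    have := DFunLike.congr_fun h j1
    rw [swapC_eq_of σ₁ σ₂ hj1,
      swapC_eq_not σ₁ σ₂ (by rw [hj1]; exact h12)] at this
    exact hf1 this.symm
  have h2 : swapC σ₁ σ₂ c1 ≠ swapD σ₁ σ₂ c2 := by
    intro h
    have := DFunLike.congr_fun h j3
    rw [swapC_eq_not σ₁ σ₂ (by rw [hj3]; exact fun h => h13 h.symm),
      swapD_eq_not σ₁ σ₂ (by rw [hj3]; exact fun h => h23 h.symm)] at this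
    exact hf3 this
  exact pair_ne _ _ _ _ h1 h2

end Classify2

theorem fiber_two_elements_iff_and_indispensable
    (n r : ℕ) (hr : 2 ≤ r) (hrn : r ≤ n) (σ₁ σ₂ : Fin r ↪ Fin n) :
    (Nat.card {x : (Fin r ↪ Fin n) → ℕ //
        suffN n r x =
          suffN n r (fun τ => (if τ = σ₁ then 1 else 0) + (if τ = σ₂ then 1 else 0))} = 2
      ↔ numComp n r σ₁ σ₂ = 2) ∧
    (numComp n r σ₁ σ₂ = 2 →
      ∀ x y : (Fin r ↪ Fin n) → ℕ,
        suffN n r x =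
          suffN n r (fun τ => (if τ = σ₁ then 1 else 0) + (if τ = σ₂ then 1 else 0)) →
        suffN n r y =
          suffN n r (fun τ => (if τ = σ₁ then 1 else 0) + (if τ = σ₂ then 1 else 0)) →
        x ≠ y →
        ∀ B : Finset ((Fin r ↪ Fin n) → ℤ), IsMarkovBasis n r B →
          (fun σ => (x σ : ℤ) - (y σ : ℤ)) ∈ B ∨
          (fun σ => (y σ : ℤ) - (x σ : ℤ)) ∈ B) := by
  classical
  have j0 : Fin r := ⟨0, by omega⟩
  -- main structural consequence of `numComp = 2`
  have hLdata : numComp n r σ₁ σ₂ = 2 →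
      ∃ xs : (Fin r ↪ Fin n) → ℕ,
        suffN n r xs =
          suffN n r (fun τ => (if τ = σ₁ then 1 else 0) + (if τ = σ₂ then 1 else 0)) ∧
        xs ≠ (fun τ => (if τ = σ₁ then 1 else 0) + (if τ = σ₂ then 1 else 0)) ∧
        ∀ z, suffN n r z =
            suffN n r (fun τ => (if τ = σ₁ then 1 else 0) + (if τ = σ₂ then 1 else 0)) →
          z = (fun τ => (if τ = σ₁ then 1 else 0) + (if τ = σ₂ then 1 else 0))
            ∨ z = xs := by
    intro hL
    unfold numComp at hL
    obtain ⟨C1, C2, hC12, huniv⟩ := Nat.card_eq_two_iff.mp hL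
    obtain ⟨j1, hj1⟩ : ∃ j, (blockGraph n r σ₁ σ₂).connectedComponentMk j = C1.1 :=
      Quot.exists_rep C1.1
    obtain ⟨j2, hj2⟩ : ∃ j, (blockGraph n r σ₁ σ₂).connectedComponentMk j = C2.1 :=
      Quot.exists_rep C2.1
    have hf1 : σ₁ j1 ≠ σ₂ j1 := fun h => C1.2 (hj1 ▸ (trivial_iff σ₁ σ₂ j1).mpr h)
    have hf2 : σ₁ j2 ≠ σ₂ j2 := fun h => C2.2 (hj2 ▸ (trivial_iff σ₁ σ₂ j2).mpr h)
    have hc12 : C1.1 ≠ C2.1 := fun h => hC12 (Subtype.ext h)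
    have hall : ∀ c, ¬ IsTrivialComp n r σ₁ σ₂ c → c = C1.1 ∨ c = C2.1 := by
      intro c hc
      have hmem : (⟨c, hc⟩ : {c // ¬ IsTrivialComp n r σ₁ σ₂ c}) ∈
          ({C1, C2} : Set {c // ¬ IsTrivialComp n r σ₁ σ₂ c}) := by
        rw [huniv]; trivial
      rcases hmem with h | h
      · exact Or.inl (congrArg Subtype.val h)
      · exact Or.inr (congrArg Subtype.val h)
    exact ⟨xswap σ₁ σ₂ C1.1, xswap_mem σ₁ σ₂ C1.1,
      xswap_ne_t σ₁ σ₂ hc12 hj1 hj2 hf1 hf2,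
      fun z hz => classify_two σ₁ σ₂ j0 hc12 hall hj1 hj2 hf1 hf2 z hz⟩
  constructor
  · constructor
    · -- card = 2 → L = 2
      intro hcard
      by_contra hL
      obtain ⟨X, Y, hXY, hXYuniv⟩ := Nat.card_eq_two_iff.mp hcard
      have hElem : ∀ z : {x : (Fin r ↪ Fin n) → ℕ //
          suffN n r x =
            suffN n r (fun τ => (if τ = σ₁ then 1 else 0) + (if τ = σ₂ then 1 else 0))},
          z = X ∨ z = Y := by
        intro z
        have hz : z ∈ ({X, Y} : Set _) := by rw [hXYuniv]; trivial
        exact hz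
      by_cases hone : ∀ c c' : {c // ¬ IsTrivialComp n r σ₁ σ₂ c}, c = c'
      · have hX := classify_le_one σ₁ σ₂ j0 hone X.1 X.2
        have hY := classify_le_one σ₁ σ₂ j0 hone Y.1 Y.2
        exact hXY (Subtype.ext (hX.trans hY.symm))
      · push_neg at hone
        obtain ⟨C1, C2, hC12⟩ := hone
        by_cases htwo : ∀ c : {c // ¬ IsTrivialComp n r σ₁ σ₂ c}, c = C1 ∨ c = C2
        · apply hL
          unfold numComp
          exact Nat.card_eq_two_iff.mpr ⟨C1, C2, hC12,
            Set.eq_univ_of_forall (fun c => by rcases htwo c with h | h <;> simp [h])⟩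
        · push_neg at htwo
          obtain ⟨C3, h31, h32⟩ := htwo
          obtain ⟨j1, hj1⟩ : ∃ j, (blockGraph n r σ₁ σ₂).connectedComponentMk j = C1.1 :=
            Quot.exists_rep C1.1
          obtain ⟨j2, hj2⟩ : ∃ j, (blockGraph n r σ₁ σ₂).connectedComponentMk j = C2.1 :=
            Quot.exists_rep C2.1
          obtain ⟨j3, hj3⟩ : ∃ j, (blockGraph n r σ₁ σ₂).connectedComponentMk j = C3.1 :=
            Quot.exists_rep C3.1
          have hf1 : σ₁ j1 ≠ σ₂ j1 := fun h => C1.2 (hj1 ▸ (trivial_iff σ₁ σ₂ j1).mpr h)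
          have hf2 : σ₁ j2 ≠ σ₂ j2 := fun h => C2.2 (hj2 ▸ (trivial_iff σ₁ σ₂ j2).mpr h)
          have hf3 : σ₁ j3 ≠ σ₂ j3 := fun h => C3.2 (hj3 ▸ (trivial_iff σ₁ σ₂ j3).mpr h)
          have h12 : C1.1 ≠ C2.1 := fun h => hC12 (Subtype.ext h)
          have h13 : C1.1 ≠ C3.1 := fun h => h31 (Subtype.ext h.symm)
          have h23 : C2.1 ≠ C3.1 := fun h => h32 (Subtype.ext h.symm)
          have d01 : xswap σ₁ σ₂ C1.1
              ≠ (fun τ => (if τ = σ₁ then 1 else 0) + (if τ = σ₂ then 1 else 0)) :=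
            xswap_ne_t σ₁ σ₂ h12 hj1 hj2 hf1 hf2
          have d02 : xswap σ₁ σ₂ C2.1
              ≠ (fun τ => (if τ = σ₁ then 1 else 0) + (if τ = σ₂ then 1 else 0)) :=
            xswap_ne_t σ₁ σ₂ h12.symm hj2 hj1 hf2 hf1
          have d12 : xswap σ₁ σ₂ C1.1 ≠ xswap σ₁ σ₂ C2.1 :=
            xswap_ne_xswap σ₁ σ₂ h12 h13 h23 hj1 hj3 hf1 hf3
          have e0 := hElem ⟨_, rfl⟩
          have e1 := hElem ⟨xswap σ₁ σ₂ C1.1, xswap_mem σ₁ σ₂ C1.1⟩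
          have e2 := hElem ⟨xswap σ₁ σ₂ C2.1, xswap_mem σ₁ σ₂ C2.1⟩
          rcases e0 with e0 | e0 <;> rcases e1 with e1 | e1 <;> rcases e2 with e2 | e2 <;>
            first
              | exact d01 (congrArg Subtype.val (e1.trans e0.symm))
              | exact d02 (congrArg Subtype.val (e2.trans e0.symm))
              | exact d12 (congrArg Subtype.val (e1.trans e2.symm))
    · -- L = 2 → card = 2
      intro hL
      obtain ⟨xs, hmem, hne, hcover⟩ := hLdata hL
      refine Nat.card_eq_two_iff.mpr ⟨⟨_, rfl⟩, ⟨xs, hmem⟩,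
        fun h => hne (congrArg Subtype.val h).symm, ?_⟩
      apply Set.eq_univ_of_forall
      intro z
      rcases hcover z.1 z.2 with h | h
      · exact Or.inl (Subtype.ext h)
      · exact Or.inr (Subtype.ext h)
  · -- indispensability
    intro hL x y hx hy hxy B hB
    obtain ⟨xs, hmem, hne, hcover⟩ := hLdata hL
    have hz : ∀ z, suffN n r z =
        suffN n r (fun τ => (if τ = σ₁ then 1 else 0) + (if τ = σ₂ then 1 else 0)) →
        z = x ∨ z = y := by
      intro z hzf
      rcases hcover x hx with hx' | hx' <;> rcases hcover y hy with hy' | hy' <;>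
        rcases hcover z hzf with hz' | hz' <;>
        first
          | exact absurd (hx'.trans hy'.symm) hxy
          | exact Or.inl (hz'.trans hx'.symm)
          | exact Or.inr (hz'.trans hy'.symm)
    obtain ⟨m, w, hw0, hwm, hwf, hstep⟩ := hB.2 x y (hx.trans hy.symm)
    have hex : ∃ i, w i = y := ⟨m, hwm⟩
    have hk : w (Nat.find hex) = y := Nat.find_spec hex
    have hkm : Nat.find hex ≤ m := Nat.find_min' hex hwm
    have hk0 : Nat.find hex ≠ 0 := fun h0 => hxy (hw0.symm.trans (h0 ▸ hk))
    obtain ⟨i, hi⟩ : ∃ i, Nat.find hex = i + 1 := ⟨Nat.find hex - 1, by omega⟩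
    have him : i < m := by omega
    have hwi : w i = x := by
      have h1 : w i ≠ y := Nat.find_min hex (by omega)
      rcases hz (w i) ((hwf i (by omega)).trans hx) with h | h
      · exact h
      · exact absurd h h1
    have hwi1 : w (i + 1) = y := by rw [← hi]; exact hk
    rcases hstep i him with h | h
    · right; rw [hwi1, hwi] at h; exact h
    · left; rw [hwi1, hwi] at h; exact h
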